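/- arXiv:2010.11939 — 3 statements merged into one kernel-verified Lean document; each statement's English description precedes it below -/
import Mathlib

section
/- With the construction φ' = (¬A₁ ∧ ⋯ ∧ ¬A_{j+1}) ∨ (A₁ ∧ Shift(φ)) and the weighted language p̃(enc(ψ)·a) = (1/3)^{|enc(ψ)·a|+1} for a satisfying ψ, the local conditional probability p(1 | enc(φ')) is strictly positive if and only if φ is satisfiable, and the local conditional probability p(0 | enc(φ')) equals 1 if and only if φ is unsatisfiable. -/
/-- Boolean formulas over variables `A_0, A_1, …` (0-indexed), with a truth constant. -/
inductive Fm : Type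
  | tru : Fm
  | var : ℕ → Fm
  | not : Fm → Fm
  | and : Fm → Fm → Fm
  | or : Fm → Fm → Fm

/-- Evaluation of a formula under an assignment `σ`. -/
def Fm.eval (σ : ℕ → Bool) : Fm → Bool
  | .tru => true
  | .var i => σ i
  | .not φ => !(φ.eval σ)
  | .and φ ψ => φ.eval σ && ψ.eval σ
  | .or φ ψ => φ.eval σ || ψ.eval σ

/-- `Shift(φ)`: rename each variable `A_i` to `A_{i+1}`. -/
def Fm.shift : Fm → Fm
  | .tru => .tru
  | .var i => .var (i + 1)
  | .not φ => .not φ.shift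
  | .and φ ψ => .and φ.shift ψ.shift
  | .or φ ψ => .or φ.shift ψ.shift

/-- The conjunction `¬A_0 ∧ ⋯ ∧ ¬A_{n-1}`. -/
def allFalse : ℕ → Fm
  | 0 => .tru
  | n + 1 => .and (allFalse n) (.not (.var n))

/-- `φ` is a formula on the variables `A_0, …, A_{j-1}`: its value depends only on them. -/
def onlyUses (j : ℕ) (φ : Fm) : Prop :=
  ∀ σ σ' : ℕ → Bool, (∀ i < j, σ i = σ' i) → φ.eval σ = φ.eval σ'

/-- An assignment `a ∈ {0,1}^n` satisfies `φ`. -/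
def satN {n : ℕ} (a : Fin n → Bool) (φ : Fm) : Prop :=
  φ.eval (fun i => if h : i < n then a ⟨i, h⟩ else false) = true

instance {n : ℕ} (a : Fin n → Bool) (φ : Fm) : Decidable (satN a φ) :=
  inferInstanceAs (Decidable (_ = true))

open scoped ENNReal

/-- A binary string `a` (read as an assignment of `A_0, A_1, …`, padded with `false`)
satisfies `φ`. -/
def satL (a : List Bool) (φ : Fm) : Prop :=
  φ.eval (fun i => a.getD i false) = true

/-- `φ' = (¬A_0 ∧ ⋯ ∧ ¬A_j) ∨ (A_0 ∧ Shift(φ))`. -/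
def phiP (j : ℕ) (φ : Fm) : Fm :=
  .or (allFalse (j + 1)) (.and (.var 0) φ.shift)


lemma allFalse_eval (σ : ℕ → Bool) : ∀ n, ((allFalse n).eval σ = true ↔ ∀ i < n, σ i = false)
  | 0 => by simp [allFalse, Fm.eval]
  | n+1 => by
    simp only [allFalse, Fm.eval, Bool.and_eq_true, allFalse_eval σ n, Bool.not_eq_true']
    constructor
    · rintro ⟨h1, h2⟩ i hi
      rcases Nat.lt_succ_iff_lt_or_eq.1 hi with h | h
      · exact h1 i h
      · exact h ▸ h2
    · intro h
      exact ⟨fun i hi => h i (Nat.lt_succ_of_lt hi), h n (Nat.lt_succ_self n)⟩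

lemma shift_eval (φ : Fm) (σ : ℕ → Bool) : φ.shift.eval σ = φ.eval (fun i => σ (i+1)) := by
  induction φ <;> simp [Fm.shift, Fm.eval, *]

lemma ofFn_getD (a : List Bool) {n : ℕ} (h : a.length = n) :
    List.ofFn (fun i : Fin n => a.getD i false) = a := by
  apply List.ext_getElem
  · simp [h]
  · intro i h1 h2
    simp only [List.getElem_ofFn]
    rw [List.getD_eq_getElem _ _ h2]

/-- With the construction `φ' = (¬A_0 ∧ ⋯ ∧ ¬A_j) ∨ (A_0 ∧ Shift(φ))`
and the weighted language `p̃(enc(ψ)·a) = (1/3)^{|enc(ψ)·a|+1}` for `a` satisfying `ψ`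
(`0` on all other strings), with local conditional probabilities
`p(c | x̂) = Z(x̂·c)/Z(x̂)`: `p(1 | enc(φ')) > 0` iff `φ` is satisfiable, and
`p(0 | enc(φ')) = 1` iff `φ` is unsatisfiable. -/
theorem stmt7 (enc : Fm → List Bool)
    (hpf : ∀ φ ψ : Fm, enc φ <+: enc ψ → φ = ψ)
    (nv : Fm → ℕ) (hnv : ∀ ψ, onlyUses (nv ψ) ψ)
    (pt : List Bool → ℝ≥0∞)
    (hpt1 : ∀ (ψ : Fm) (a : List Bool), a.length = nv ψ → satL a ψ →
      pt (enc ψ ++ a) = (1 / 3 : ℝ≥0∞) ^ ((enc ψ ++ a).length + 1))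
    (hpt0 : ∀ x : List Bool,
      (¬ ∃ (ψ : Fm) (a : List Bool), x = enc ψ ++ a ∧ a.length = nv ψ ∧ satL a ψ) →
      pt x = 0)
    (φ : Fm) (j : ℕ) (hj : nv φ = j) (hj' : nv (phiP j φ) = j + 1)
    (Z : List Bool → ℝ≥0∞)
    (hZ : ∀ y : List Bool, Z y = ∑' x : {x : List Bool // y <+: x}, pt x.1) :
    (0 < Z (enc (phiP j φ) ++ [true]) / Z (enc (phiP j φ)) ↔
        ∃ a : List Bool, a.length = j ∧ satL a φ) ∧
    (Z (enc (phiP j φ) ++ [false]) / Z (enc (phiP j φ)) = 1 ↔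
        ¬ ∃ a : List Bool, a.length = j ∧ satL a φ) := by

  have hptle : ∀ x, pt x ≤ 1 := by
    intro x
    by_cases h : ∃ ψ a, x = enc ψ ++ a ∧ a.length = nv ψ ∧ satL a ψ
    · obtain ⟨ψ, a, rfl, h1, h2⟩ := h
      rw [hpt1 ψ a h1 h2]
      exact pow_le_one' (by norm_num) _
    · rw [hpt0 x h]; exact zero_le_one
  have evalP : ∀ (c : Bool) (b : List Bool), satL (c :: b) (phiP j φ) ↔
      ((c = false ∧ ∀ i < j, b.getD i false = false) ∨ (c = true ∧ satL b φ)) := by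
    intro c b
    have h1 : (Fm.shift φ).eval (fun i => (c::b).getD i false)
        = φ.eval (fun i => b.getD i false) := by
      rw [shift_eval]
      simp [List.getD_cons_succ]
    have hun : satL (c :: b) (phiP j φ) ↔
        ((∀ i < j + 1, (c :: b).getD i false = false) ∨ (c = true ∧ satL b φ)) := by
      show ((allFalse (j+1)).eval (fun i => (c::b).getD i false)
          || ((fun i => (c::b).getD i false) 0
            && (Fm.shift φ).eval (fun i => (c::b).getD i false))) = true ↔ _
      rw [Bool.or_eq_true, Bool.and_eq_true, h1, allFalse_eval]
      simp [satL]
    rw [hun]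
    constructor
    · rintro (h | h)
      · refine Or.inl ⟨by simpa using h 0 (Nat.succ_pos j), fun i hi => ?_⟩
        simpa using h (i+1) (by omega)
      · exact Or.inr h
    · rintro (⟨h0, h⟩ | h)
      · refine Or.inl (fun i hi => ?_)
        cases i with
        | zero => simpa using h0
        | succ i => simpa using h i (by omega)
      · exact Or.inr h
  have hrepl : ∀ b : List Bool, b.length = j →
      ((∀ i < j, b.getD i false = false) ↔ b = List.replicate j false) := by
    intro b hb
    constructor
    · intro h
      have h2 : b = List.replicate b.length false := by
        apply List.eq_replicate_of_mem
        intro x hx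
        rcases List.mem_iff_getElem.1 hx with ⟨i, hi, rfl⟩
        have := h i (hb ▸ hi)
        rwa [List.getD_eq_getElem _ _ hi] at this
      rw [hb] at h2; exact h2
    · rintro rfl i hi
      rw [List.getD_eq_getElem _ _ (by simpa using hi), List.getElem_replicate]
  have satP : ∀ a : List Bool, a.length = j + 1 →
      (satL a (phiP j φ) ↔ a = false :: List.replicate j false ∨
        ∃ b, a = true :: b ∧ b.length = j ∧ satL b φ) := by
    intro a ha
    match a with
    | [] => simp at ha
    | c :: b =>
      have hb : b.length = j := by simpa using ha
      rw [evalP]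
      constructor
      · rintro (⟨rfl, h⟩ | ⟨rfl, h⟩)
        · exact Or.inl (by rw [(hrepl b hb).1 h])
        · exact Or.inr ⟨b, rfl, hb, h⟩
      · rintro (h | ⟨b', h, hb', hs⟩)
        · injection h with h1 h2
          exact Or.inl ⟨h1, h2 ▸ (hrepl _ hb).2 (by rw [h2])⟩
        · injection h with h1 h2
          subst h2
          exact Or.inr ⟨h1, hs⟩
  have key : ∀ x : List Bool, enc (phiP j φ) <+: x → pt x ≠ 0 →
      ∃ a, x = enc (phiP j φ) ++ a ∧ a.length = j + 1 ∧ satL a (phiP j φ) := by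
    intro x hpre hne
    have hex : ∃ ψ a, x = enc ψ ++ a ∧ a.length = nv ψ ∧ satL a ψ := by
      by_contra h; exact hne (hpt0 x h)
    obtain ⟨ψ, a, rfl, hlen, hsat⟩ := hex
    have hψ : ψ = phiP j φ := by
      rcases List.prefix_or_prefix_of_prefix hpre (List.prefix_append _ _) with h | h
      · exact (hpf _ _ h).symm
      · exact hpf _ _ h
    subst hψ
    exact ⟨a, rfl, hj' ▸ hlen, hsat⟩
  -- the all-false witness
  have hsat0 : satL (false :: List.replicate j false) (phiP j φ) :=
    (satP _ (by simp)).2 (Or.inl rfl)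
  have hpt_x0 : pt (enc (phiP j φ) ++ (false :: List.replicate j false))
      = (1/3 : ℝ≥0∞) ^ ((enc (phiP j φ) ++ (false :: List.replicate j false)).length + 1) :=
    hpt1 _ _ (by simp [hj']) hsat0
  have hc0 : pt (enc (phiP j φ) ++ (false :: List.replicate j false)) ≠ 0 := by
    rw [hpt_x0]; exact pow_ne_zero _ (by norm_num)
  have hct : pt (enc (phiP j φ) ++ (false :: List.replicate j false)) ≠ ⊤ := by
    rw [hpt_x0]; exact ENNReal.pow_ne_top (by norm_num)
  have hZfalse : Z (enc (phiP j φ) ++ [false])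
      = pt (enc (phiP j φ) ++ (false :: List.replicate j false)) := by
    rw [hZ]
    have hm : enc (phiP j φ) ++ [false] <+: enc (phiP j φ) ++ (false :: List.replicate j false) :=
      ⟨List.replicate j false, by simp⟩
    refine tsum_eq_single (⟨enc (phiP j φ) ++ (false :: List.replicate j false), hm⟩ :
      {x : List Bool // enc (phiP j φ) ++ [false] <+: x}) ?_
    rintro ⟨x, hx⟩ hne
    by_contra hp
    obtain ⟨a, rfl, hlen, hsat⟩ :=
      key x ((List.prefix_append _ [false]).trans hx) hp
    rcases (satP a hlen).1 hsat with rfl | ⟨b, rfl, _, _⟩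
    · exact hne rfl
    · rcases (List.prefix_append_right_inj (enc (phiP j φ))).1 hx with ⟨t, ht⟩
      simp at ht
  have hZy0 : Z (enc (phiP j φ)) ≠ 0 := by
    rw [hZ, Ne, ENNReal.tsum_eq_zero]
    push_neg
    exact ⟨⟨enc (phiP j φ) ++ (false :: List.replicate j false),
      List.prefix_append _ _⟩, hc0⟩
  have hfin : Z (enc (phiP j φ)) ≠ ⊤ := by
    have hsub : Z (enc (phiP j φ))
        = ∑' x : List Bool, Set.indicator {x | enc (phiP j φ) <+: x} pt x := by
      rw [hZ]; exact tsum_subtype _ _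
    rw [hsub]
    rw [tsum_eq_sum (s := Finset.image
        (fun v : Fin (j+1) → Bool => enc (phiP j φ) ++ List.ofFn v) Finset.univ) ?_]
    · refine (ENNReal.sum_lt_top.2 fun a _ => ?_).ne
      calc Set.indicator {x | enc (phiP j φ) <+: x} pt a ≤ pt a :=
              Set.indicator_le_self _ _ a
        _ ≤ 1 := hptle a
        _ < ⊤ := ENNReal.one_lt_top
    · intro b hb
      by_cases hyb : enc (phiP j φ) <+: b
      · have hmem : b ∈ {x : List Bool | enc (phiP j φ) <+: x} := hyb
        rw [Set.indicator_of_mem hmem]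
        by_contra hp
        obtain ⟨a, rfl, hlen, _⟩ := key b hyb hp
        refine hb (Finset.mem_image.2 ⟨fun i : Fin (j+1) => a.getD i false,
          Finset.mem_univ _, ?_⟩)
        rw [ofFn_getD a hlen]
      · have hnm : b ∉ {x : List Bool | enc (phiP j φ) <+: x} := hyb
        exact Set.indicator_of_notMem hnm _
  have htrue : Z (enc (phiP j φ) ++ [true]) ≠ 0 ↔ ∃ b : List Bool, b.length = j ∧ satL b φ := by
    constructor
    · intro h
      rw [hZ, Ne, ENNReal.tsum_eq_zero] at h
      push_neg at h
      obtain ⟨⟨x, hx⟩, hp⟩ := h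
      obtain ⟨a, rfl, hlen, hsat⟩ := key x ((List.prefix_append _ [true]).trans hx) hp
      rcases (satP a hlen).1 hsat with rfl | ⟨b, rfl, hb, hs⟩
      · rcases (List.prefix_append_right_inj (enc (phiP j φ))).1 hx with ⟨t, ht⟩
        simp at ht
      · exact ⟨b, hb, hs⟩
    · rintro ⟨b, hb, hs⟩
      have hsat : satL (true :: b) (phiP j φ) :=
        (satP _ (by simp [hb])).2 (Or.inr ⟨b, rfl, hb, hs⟩)
      have hv := hpt1 (phiP j φ) (true :: b) (by simp [hb, hj']) hsat
      have hle : pt (enc (phiP j φ) ++ (true :: b)) ≤ Z (enc (phiP j φ) ++ [true]) := by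
        rw [hZ]
        have hm : enc (phiP j φ) ++ [true] <+: enc (phiP j φ) ++ (true :: b) := ⟨b, by simp⟩
        exact ENNReal.le_tsum (⟨enc (phiP j φ) ++ (true :: b), hm⟩ :
          {x : List Bool // enc (phiP j φ) ++ [true] <+: x})
      intro h0
      rw [h0, hv] at hle
      exact (pow_ne_zero _ (by norm_num : (1/3:ℝ≥0∞) ≠ 0))
        (le_antisymm hle zero_le)
  constructor
  · rw [pos_iff_ne_zero, Ne, ENNReal.div_eq_zero_iff, not_or]
    constructor
    · rintro ⟨h1, _⟩; exact htrue.1 h1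
    · intro h; exact ⟨htrue.2 h, hfin⟩
  · rw [ENNReal.div_eq_one_iff hZy0 hfin]
    constructor
    · intro heq hsat
      obtain ⟨b, hb, hs⟩ := hsat
      have hsat1 : satL (true :: b) (phiP j φ) :=
        (satP _ (by simp [hb])).2 (Or.inr ⟨b, rfl, hb, hs⟩)
      have hv := hpt1 (phiP j φ) (true :: b) (by simp [hb, hj']) hsat1
      have hne : (enc (phiP j φ) ++ (false :: List.replicate j false))
          ≠ (enc (phiP j φ) ++ (true :: b)) := by
        intro h
        have := List.append_cancel_left h
        simp at this
      have hsum : pt (enc (phiP j φ) ++ (false :: List.replicate j false))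
          + pt (enc (phiP j φ) ++ (true :: b)) ≤ Z (enc (phiP j φ)) := by
        rw [hZ]
        have h2 := ENNReal.sum_le_tsum
          (f := fun x : {x : List Bool // enc (phiP j φ) <+: x} => pt x.1)
          ({⟨_, List.prefix_append _ (false :: List.replicate j false)⟩,
            ⟨_, List.prefix_append _ (true :: b)⟩} : Finset _)
        rwa [Finset.sum_pair (fun h => hne (congrArg Subtype.val h))] at h2
      have hlt : pt (enc (phiP j φ) ++ (false :: List.replicate j false))
          < Z (enc (phiP j φ)) := by
        refine lt_of_lt_of_le (ENNReal.lt_add_right hct ?_) hsum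
        rw [hv]; exact pow_ne_zero _ (by norm_num)
      rw [← hZfalse, heq] at hlt
      exact lt_irrefl _ hlt
    · intro hunsat
      rw [hZfalse, hZ]
      refine (tsum_eq_single (f := fun x : {x : List Bool // enc (phiP j φ) <+: x} => pt x.1)
        (⟨enc (phiP j φ) ++ (false :: List.replicate j false),
          List.prefix_append _ _⟩ : {x : List Bool // enc (phiP j φ) <+: x}) ?_).symm
      rintro ⟨x, hx⟩ hne
      by_contra hp
      obtain ⟨a, rfl, hlen, hsat⟩ := key x hx hp
      rcases (satP a hlen).1 hsat with rfl | ⟨b, rfl, hb, hs⟩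
      · exact hne rfl
      · exact hunsat ⟨b, hb, hs⟩
end

section
/- In the full-support construction with Z(x̂) = Z₁(x̂) + ε·Z₂(x̂), Z₂(enc(φ')·0) = Z₂(enc(φ')·1) < (1/7)·Z₁(enc(φ')·0), and Z₁(enc(φ')·1) = 2^{k−1}·#(φ)·Z₁(enc(φ')·0): if φ is unsatisfiable then p(0 | enc(φ')) > Z(enc(φ')·0) / ((1 + 2ε/7)·Z₁(enc(φ')·0)), while if φ is satisfiable then p(0 | enc(φ')) < Z(enc(φ')·0) / ((1 + 2^{k−1})·Z₁(enc(φ')·0)). Hence the former probability exceeds the latter by a factor of at least (1 + 2^{k−1})/(1 + 2ε/7). -/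
/-- In the full-support construction, with `Z(x̂) = Z₁(x̂) + ε·Z₂(x̂)`,
`Z₂(enc(φ')·0) = Z₂(enc(φ')·1) < (1/7)·Z₁(enc(φ')·0)` and
`Z₁(enc(φ')·1) = 2^{k−1}·#(φ)·Z₁(enc(φ')·0)`: if `φ` is unsatisfiable (`#(φ) = 0`) then
`p(0 | enc(φ')) > Z(enc(φ')·0) / ((1 + 2ε/7)·Z₁(enc(φ')·0))`, while if `φ` is satisfiable
(`#(φ) ≥ 1`) then `p(0 | enc(φ')) < Z(enc(φ')·0) / ((1 + 2^{k−1})·Z₁(enc(φ')·0))`; and the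
former bound exceeds the latter by the factor `(1 + 2^{k−1})/(1 + 2ε/7)`. -/
theorem stmt13 (eps : ℝ) (heps : 0 < eps) (k : ℕ) (hk : 1 ≤ k) (N : ℕ)
    (Z10 Z11 Z20 Z21 : ℝ)
    (hZ10 : 0 < Z10) (hZ20 : 0 < Z20) (hZ2021 : Z20 = Z21)
    (hZ21 : Z21 < (1 / 7) * Z10)
    (hZ11 : Z11 = 2 ^ (k - 1) * (N : ℝ) * Z10) :
    (N = 0 →
      (Z10 + eps * Z20) / ((Z10 + eps * Z20) + (Z11 + eps * Z21))
        > (Z10 + eps * Z20) / ((1 + 2 * eps / 7) * Z10)) ∧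
    (1 ≤ N →
      (Z10 + eps * Z20) / ((Z10 + eps * Z20) + (Z11 + eps * Z21))
        < (Z10 + eps * Z20) / ((1 + 2 ^ (k - 1)) * Z10)) ∧
    (Z10 + eps * Z20) / ((1 + 2 * eps / 7) * Z10)
      ≥ ((1 + 2 ^ (k - 1)) / (1 + 2 * eps / 7))
          * ((Z10 + eps * Z20) / ((1 + 2 ^ (k - 1)) * Z10)) := by
  have hnum : 0 < Z10 + eps * Z20 := by positivity
  have hpow : (0:ℝ) < 2 ^ (k - 1) := by positivity
  refine ⟨?_, ?_, ?_⟩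
  · intro hN
    subst hZ2021
    have h11 : Z11 = 0 := by simp [hZ11, hN]
    apply div_lt_div_of_pos_left hnum
    · positivity
    · rw [h11]
      nlinarith
  · intro hN
    apply div_lt_div_of_pos_left hnum
    · positivity
    · have hN1 : (1:ℝ) ≤ (N:ℝ) := by exact_mod_cast hN
      have h1 : 2 ^ (k - 1) * Z10 ≤ Z11 := by
        rw [hZ11]
        nlinarith [mul_nonneg (mul_nonneg hpow.le hZ10.le) (sub_nonneg.2 hN1)]
      nlinarith [mul_pos heps hZ20, mul_pos heps (hZ2021 ▸ hZ20)]
  · apply ge_of_eq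
    have h1 : (0:ℝ) < 1 + 2 ^ (k - 1) := by positivity
    have h2 : (0:ℝ) < 1 + 2 * eps / 7 := by positivity
    field_simp
end

section
/- For residual energy-based models q'_θ(x) ∝ q'₀(x)·exp g_θ(x) and q''_θ(x) ∝ q''₀(x)·exp g_θ(x) over a finite support, the KL-divergence difference satisfies KL[p‖q'_θ] − KL[p‖q''_θ] = KL[p‖q'₀] − KL[p‖q''₀] + log(Z'/Z''), where Z' = E_{x∼q'₀}[exp g_θ(x)] and Z'' = E_{x∼q''₀}[exp g_θ(x)]. Consequently, if Z'/Z'' > exp(−c) and KL[p‖q'₀] − KL[p‖q''₀] > c for some c > 0, then KL[p‖q'_θ] > KL[p‖q''_θ]. -/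
/-- KL divergence between two distributions on a finite set. -/
noncomputable def KL {S : Type*} [Fintype S] (p q : S → ℝ) : ℝ :=
  ∑ x, p x * Real.log (p x / q x)

lemma KL_shift {S : Type*} [Fintype S] (p q0 g : S → ℝ)
    (hp : ∀ x, 0 ≤ p x)
    (hsupp : ∀ x, 0 < p x → 0 < q0 x) (Z : ℝ) (hZ : 0 < Z) :
    KL p (fun x => q0 x * Real.exp (g x) / Z)
      = KL p q0 - (∑ x, p x * g x) + (∑ x, p x) * Real.log Z := by
  unfold KL
  rw [← Finset.sum_sub_distrib, Finset.sum_mul, ← Finset.sum_add_distrib]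
  apply Finset.sum_congr rfl
  intro x _
  rcases eq_or_lt_of_le (hp x) with h | h
  · simp [← h]
  · have hq := hsupp x h
    have he : (0:ℝ) < Real.exp (g x) := Real.exp_pos _
    rw [Real.log_div (ne_of_gt h) (by positivity),
        Real.log_div (by positivity) (ne_of_gt hZ),
        Real.log_mul (ne_of_gt hq) (ne_of_gt he), Real.log_exp,
        Real.log_div (ne_of_gt h) (ne_of_gt hq)]
    ring

/-- For residual energy-based models
`q'_θ(x) ∝ q'₀(x)·exp g_θ(x)` and `q''_θ(x) ∝ q''₀(x)·exp g_θ(x)` over a finite support,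
`KL[p‖q'_θ] − KL[p‖q''_θ] = KL[p‖q'₀] − KL[p‖q''₀] + log(Z'/Z'')` where
`Z' = E_{x∼q'₀}[exp g_θ(x)]` and `Z'' = E_{x∼q''₀}[exp g_θ(x)]`.  Consequently, if
`Z'/Z'' > exp(−c)` and `KL[p‖q'₀] − KL[p‖q''₀] > c` for some `c > 0`, then
`KL[p‖q'_θ] > KL[p‖q''_θ]`. -/
theorem stmt19 {S : Type*} [Fintype S] (p q0' q0'' g : S → ℝ)
    (hp : ∀ x, 0 ≤ p x) (hps : ∑ x, p x = 1)
    (hq' : ∀ x, 0 ≤ q0' x) (hq's : ∑ x, q0' x = 1)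
    (hq'' : ∀ x, 0 ≤ q0'' x) (hq''s : ∑ x, q0'' x = 1)
    (hsupp' : ∀ x, 0 < p x → 0 < q0' x)
    (hsupp'' : ∀ x, 0 < p x → 0 < q0'' x)
    (Z' Z'' : ℝ)
    (hZ' : Z' = ∑ x, q0' x * Real.exp (g x))
    (hZ'' : Z'' = ∑ x, q0'' x * Real.exp (g x)) :
    KL p (fun x => q0' x * Real.exp (g x) / Z')
        - KL p (fun x => q0'' x * Real.exp (g x) / Z'')
      = KL p q0' - KL p q0'' + Real.log (Z' / Z'') ∧
    ∀ c : ℝ, 0 < c → Z' / Z'' > Real.exp (-c) → KL p q0' - KL p q0'' > c →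
      KL p (fun x => q0' x * Real.exp (g x) / Z')
        > KL p (fun x => q0'' x * Real.exp (g x) / Z'') := by
  obtain ⟨x0, hx0⟩ : ∃ x, 0 < p x := by
    by_contra h
    push_neg at h
    have : ∑ x, p x = 0 := Finset.sum_eq_zero fun x _ => le_antisymm (h x) (hp x)
    rw [hps] at this; norm_num at this
  have hZ'pos : 0 < Z' := by
    rw [hZ']
    apply Finset.sum_pos' (fun x _ => mul_nonneg (hq' x) (Real.exp_pos _).le)
    exact ⟨x0, Finset.mem_univ _, by have := hsupp' x0 hx0; positivity⟩
  have hZ''pos : 0 < Z'' := by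
    rw [hZ'']
    apply Finset.sum_pos' (fun x _ => mul_nonneg (hq'' x) (Real.exp_pos _).le)
    exact ⟨x0, Finset.mem_univ _, by have := hsupp'' x0 hx0; positivity⟩
  have key : KL p (fun x => q0' x * Real.exp (g x) / Z')
        - KL p (fun x => q0'' x * Real.exp (g x) / Z'')
      = KL p q0' - KL p q0'' + Real.log (Z' / Z'') := by
    rw [KL_shift p q0' g hp hsupp' Z' hZ'pos, KL_shift p q0'' g hp hsupp'' Z'' hZ''pos,
        hps, Real.log_div (ne_of_gt hZ'pos) (ne_of_gt hZ''pos)]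
    ring
  refine ⟨key, fun c hc hZr hKL => ?_⟩
  have hlog : Real.log (Z' / Z'') > -c := by
    calc Real.log (Z' / Z'') > Real.log (Real.exp (-c)) :=
          Real.log_lt_log (Real.exp_pos _) hZr
      _ = -c := Real.log_exp _
  linarith [key]
end
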